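/- In the graded ℚ-algebra A = ℚ[p₁, ē]/(p₁ⁿ, ē² − (−1)^{n−1}p₁^{n−1}) with deg p₁ = 4, deg ē = 2n−2 (n ≥ 2), the elements {p₁^i : 0 ≤ i ≤ n−1} ∪ {ē·p₁^i : 0 ≤ i ≤ n−1} form a ℚ-vector space basis; in particular dim_ℚ A = 2n. -/

import Mathlib

open MvPolynomial

/-- The relations ideal of `H^*(G̃₃(ℝ^{2n+1}); ℚ) = ℚ[p₁,ē]/(p₁ⁿ, ē² - (-1)^{n-1} p₁^{n-1})`,
with `p₁ = X 0` and `ē = X 1`. -/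
noncomputable def orGrass3Ideal (n : ℕ) : Ideal (MvPolynomial (Fin 2) ℚ) :=
  Ideal.span
    ({X 0 ^ n,
      X 1 ^ 2 - (-1 : MvPolynomial (Fin 2) ℚ) ^ (n - 1) * X 0 ^ (n - 1)} :
      Set (MvPolynomial (Fin 2) ℚ))

namespace OrGrass3Aux

open Polynomial AdjoinRoot

noncomputable abbrev Rng (n : ℕ) : Type := AdjoinRoot (Polynomial.X ^ n : Polynomial ℚ)

noncomputable def cc (n : ℕ) : Rng n :=
  (-1 : Rng n) ^ (n - 1) * (root _) ^ (n - 1)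

noncomputable def gpoly (n : ℕ) : Polynomial (Rng n) :=
  Polynomial.X ^ 2 - Polynomial.C (cc n)

noncomputable abbrev Sng (n : ℕ) : Type := AdjoinRoot (gpoly n)

lemma gpoly_monic (n : ℕ) : (gpoly n).Monic :=
  Polynomial.monic_X_pow_sub_C _ two_ne_zero

abbrev Quot (n : ℕ) : Type := MvPolynomial (Fin 2) ℚ ⧸ orGrass3Ideal n

lemma root_pow_n (n : ℕ) : (root (Polynomial.X ^ n : Polynomial ℚ)) ^ n = 0 := by
  have h := AdjoinRoot.mk_self (f := (Polynomial.X ^ n : Polynomial ℚ))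
  rwa [← AdjoinRoot.aeval_eq, map_pow, Polynomial.aeval_X] at h

/-- the forward map on polynomials -/
noncomputable def f (n : ℕ) : MvPolynomial (Fin 2) ℚ →ₐ[ℚ] Sng n :=
  MvPolynomial.aeval
    ![algebraMap (Rng n) (Sng n) (root _), root (gpoly n)]

lemma f_X0 (n : ℕ) : f n (X 0) = algebraMap (Rng n) (Sng n) (root _) := by
  simp [f]

lemma f_X1 (n : ℕ) : f n (X 1) = root (gpoly n) := by
  simp [f]

lemma rootg_sq (n : ℕ) :
    root (gpoly n) ^ 2 = algebraMap (Rng n) (Sng n) (cc n) := by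
  have h := AdjoinRoot.mk_self (f := gpoly n)
  rw [← AdjoinRoot.aeval_eq] at h
  rw [gpoly, map_sub, map_pow, Polynomial.aeval_X, Polynomial.aeval_C, sub_eq_zero] at h
  exact h

lemma f_vanish (n : ℕ) : ∀ a ∈ orGrass3Ideal n, f n a = 0 := by
  intro a ha
  have hle : orGrass3Ideal n ≤ RingHom.ker (f n).toRingHom := by
    rw [orGrass3Ideal, Ideal.span_le]
    rintro a (rfl | rfl) <;> rw [SetLike.mem_coe, RingHom.mem_ker]
    · show f n _ = 0
      rw [map_pow, f_X0, ← map_pow, root_pow_n, map_zero]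
    · show f n _ = 0
      rw [map_sub, map_pow, map_mul, map_pow, map_pow, f_X1, f_X0, map_neg, map_one,
        rootg_sq, cc, map_mul, map_pow, map_pow, map_neg, map_one, sub_self]
  exact hle ha

noncomputable def F (n : ℕ) : Quot n →ₐ[ℚ] Sng n :=
  Ideal.Quotient.liftₐ _ (f n) (f_vanish n)

lemma F_mk (n : ℕ) (p : MvPolynomial (Fin 2) ℚ) :
    F n (Ideal.Quotient.mk _ p) = f n p := by
  simp [F]
  exact Ideal.Quotient.lift_mk _ _ _

lemma mkq_X0_pow_n (n : ℕ) :
    (Ideal.Quotient.mk (orGrass3Ideal n) (X 0)) ^ n = 0 := by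
  rw [← map_pow, Ideal.Quotient.eq_zero_iff_mem]
  exact Ideal.subset_span (Or.inl rfl)

noncomputable def φ (n : ℕ) : Rng n →ₐ[ℚ] Quot n :=
  AdjoinRoot.liftAlgHom _ (Algebra.ofId ℚ (Quot n)) (Ideal.Quotient.mk (orGrass3Ideal n) (X 0))
    (by rw [Polynomial.eval₂_X_pow]; exact mkq_X0_pow_n n)

lemma φ_root (n : ℕ) : φ n (root _) = Ideal.Quotient.mk (orGrass3Ideal n) (X 0) := by
  simp [φ]

lemma gpoly_eval₂ (n : ℕ) :
    (gpoly n).eval₂ (φ n).toRingHom (Ideal.Quotient.mk (orGrass3Ideal n) (X 1)) = 0 := by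
  have hm : Ideal.Quotient.mk (orGrass3Ideal n)
      (X 1 ^ 2 - (-1 : MvPolynomial (Fin 2) ℚ) ^ (n - 1) * X 0 ^ (n - 1)) = 0 :=
    Ideal.Quotient.eq_zero_iff_mem.mpr (Ideal.subset_span (Or.inr rfl))
  rw [map_sub, map_pow, map_mul, map_pow, map_pow, map_neg, map_one] at hm
  rw [gpoly, Polynomial.eval₂_sub, Polynomial.eval₂_pow, Polynomial.eval₂_X,
    Polynomial.eval₂_C]
  show _ - φ n (cc n) = 0
  rw [cc, map_mul, map_pow, map_pow, map_neg, map_one, φ_root]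
  exact hm

noncomputable def Gr (n : ℕ) : Sng n →+* Quot n :=
  AdjoinRoot.lift (φ n).toRingHom (Ideal.Quotient.mk (orGrass3Ideal n) (X 1)) (gpoly_eval₂ n)

lemma Gr_of (n : ℕ) (r : Rng n) : Gr n (AdjoinRoot.of _ r) = φ n r :=
  AdjoinRoot.lift_of _

lemma Gr_root (n : ℕ) : Gr n (root (gpoly n)) = Ideal.Quotient.mk (orGrass3Ideal n) (X 1) :=
  AdjoinRoot.lift_root _

noncomputable def G (n : ℕ) : Sng n →ₐ[ℚ] Quot n where
  toRingHom := Gr n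
  commutes' := by
    intro q
    rw [IsScalarTower.algebraMap_apply ℚ (Rng n) (Sng n), AdjoinRoot.algebraMap_eq]
    show Gr n (AdjoinRoot.of _ _) = _
    rw [Gr_of, AlgHom.commutes]

lemma G_apply (n : ℕ) (s : Sng n) : G n s = Gr n s := rfl

lemma F_φ (n : ℕ) (r : Rng n) : F n (φ n r) = algebraMap (Rng n) (Sng n) r := by
  induction r using AdjoinRoot.induction_on with
  | ih p =>
    rw [φ, AdjoinRoot.liftAlgHom_mk, Algebra.toRingHom_ofId, ← Polynomial.aeval_def]
    rw [← Polynomial.aeval_algHom_apply (F n), F_mk, f_X0]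
    have h : algebraMap (Rng n) (Sng n) (root _) =
        (IsScalarTower.toAlgHom ℚ (Rng n) (Sng n)) (root (Polynomial.X ^ n : Polynomial ℚ)) :=
      rfl
    rw [h, Polynomial.aeval_algHom_apply, AdjoinRoot.aeval_eq]
    rfl

lemma FG (n : ℕ) : (F n).comp (G n) = AlgHom.id ℚ (Sng n) := by
  apply AlgHom.ext
  intro s
  induction s using AdjoinRoot.induction_on with
  | ih p =>
    have h2 : ((F n).toRingHom.comp (G n).toRingHom).comp (AdjoinRoot.of (gpoly n)) =
        AdjoinRoot.of (gpoly n) := by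
      refine RingHom.ext fun r => ?_
      show F n (G n (AdjoinRoot.of _ r)) = _
      rw [G_apply, Gr_of, F_φ, AdjoinRoot.algebraMap_eq]
    have h1 : ((F n).toRingHom.comp (G n).toRingHom) (root (gpoly n)) = root (gpoly n) := by
      show F n (G n (root (gpoly n))) = _
      rw [G_apply, Gr_root, F_mk, f_X1]
    have hmk : AdjoinRoot.mk (gpoly n) p =
        Polynomial.eval₂ (AdjoinRoot.of (gpoly n)) (root (gpoly n)) p := by
      rw [← AdjoinRoot.aeval_eq, Polynomial.aeval_def, AdjoinRoot.algebraMap_eq]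
    simp only [AlgHom.comp_apply, AlgHom.coe_id, id_eq]
    show ((F n).toRingHom.comp (G n).toRingHom) _ = _
    rw [hmk, Polynomial.hom_eval₂, h2, h1]

lemma GF (n : ℕ) : (G n).comp (F n) = AlgHom.id ℚ (Quot n) := by
  apply Ideal.Quotient.algHom_ext
  apply MvPolynomial.algHom_ext
  intro i
  fin_cases i <;>
    simp only [AlgHom.comp_apply, Ideal.Quotient.mkₐ_eq_mk, AlgHom.coe_id, id_eq, F_mk]
  · show G n (f n (X 0)) = Ideal.Quotient.mk (orGrass3Ideal n) (X 0)
    rw [f_X0, AdjoinRoot.algebraMap_eq, G_apply, Gr_of, φ_root]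
  · show G n (f n (X 1)) = Ideal.Quotient.mk (orGrass3Ideal n) (X 1)
    rw [f_X1, G_apply, Gr_root]

noncomputable def e (n : ℕ) : Quot n ≃ₐ[ℚ] Sng n :=
  AlgEquiv.ofAlgHom (F n) (G n) (FG n) (GF n)

lemma e_mk (n : ℕ) (p : MvPolynomial (Fin 2) ℚ) :
    e n (Ideal.Quotient.mk _ p) = f n p :=
  F_mk n p

end OrGrass3Aux

section
open OrGrass3Aux Polynomial AdjoinRoot

/-- In `A = ℚ[p₁,ē]/(p₁ⁿ, ē² - (-1)^{n-1} p₁^{n-1})` (n ≥ 2), the elements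
`p₁^i` for `0 ≤ i ≤ n-1` together with `ē·p₁^i` for `0 ≤ i ≤ n-1` form a
`ℚ`-basis; in particular `dim_ℚ A = 2n`. -/
theorem stmt5 (n : ℕ) (hn : 2 ≤ n) :
    ∃ b : Module.Basis (Fin (2 * n)) ℚ (MvPolynomial (Fin 2) ℚ ⧸ orGrass3Ideal n),
      ∀ i : Fin (2 * n),
        b i = Ideal.Quotient.mk (orGrass3Ideal n)
          (if (i : ℕ) < n then X 0 ^ (i : ℕ) else X 1 * X 0 ^ ((i : ℕ) - n)) := by
  haveI : Nontrivial (Rng n) := AdjoinRoot.nontrivial _ (by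
    rw [Polynomial.degree_X_pow]
    simp only [ne_eq, Nat.cast_eq_zero]
    omega)
  set pbR := AdjoinRoot.powerBasis' (Polynomial.monic_X_pow n (R := ℚ)) with hpbR
  set pbS := AdjoinRoot.powerBasis' (gpoly_monic n) with hpbS
  have hdR : pbR.dim = n := by
    rw [hpbR, AdjoinRoot.powerBasis'_dim, Polynomial.natDegree_X_pow]
  have hdS : pbS.dim = 2 := by
    rw [hpbS, AdjoinRoot.powerBasis'_dim, gpoly, Polynomial.natDegree_X_pow_sub_C]
  let bR : Module.Basis (Fin n) ℚ (Rng n) := pbR.basis.reindex (finCongr hdR)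
  let bS : Module.Basis (Fin 2) (Rng n) (Sng n) := pbS.basis.reindex (finCongr hdS)
  have hbR : ∀ j : Fin n, bR j = (root _ : Rng n) ^ (j : ℕ) := by
    intro j
    simp [bR, Module.Basis.reindex_apply, PowerBasis.basis_eq_pow, hpbR]
  have hbS : ∀ k : Fin 2, bS k = (root (gpoly n)) ^ (k : ℕ) := by
    intro k
    simp [bS, Module.Basis.reindex_apply, PowerBasis.basis_eq_pow, hpbS]
  have h2n : ∀ (j : Fin n) (k : Fin 2), (j : ℕ) + n * (k : ℕ) < 2 * n := by
    rintro ⟨j, hj⟩ ⟨k, hk⟩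
    interval_cases k <;> simp <;> omega
  let eqv : Fin (2 * n) ≃ Fin n × Fin 2 :=
    { toFun := fun i => if h : (i : ℕ) < n then (⟨i, h⟩, 0)
        else (⟨(i : ℕ) - n, by omega⟩, 1)
      invFun := fun jk => ⟨(jk.1 : ℕ) + n * (jk.2 : ℕ), h2n jk.1 jk.2⟩
      left_inv := by
        rintro ⟨i, hi⟩
        dsimp only
        split_ifs with h
        · apply Fin.ext
          simp
        · apply Fin.ext
          simp
          omega
      right_inv := by
        rintro ⟨⟨j, hj⟩, ⟨k, hk⟩⟩
        dsimp only
        interval_cases k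
        · rw [dif_pos (by simpa using hj)]
          simp
        · rw [dif_neg (by simp)]
          refine Prod.ext ?_ rfl
          apply Fin.ext
          simp }
  refine ⟨((bR.smulTower bS).map (e n).symm.toLinearEquiv).reindex eqv.symm, ?_⟩
  intro i
  rw [Module.Basis.reindex_apply, Equiv.symm_symm, Module.Basis.map_apply,
    AlgEquiv.toLinearEquiv_apply, AlgEquiv.symm_apply_eq, Module.Basis.smulTower_apply]
  by_cases h : (i : ℕ) < n
  · have heqv : eqv i = (⟨(i : ℕ), h⟩, 0) := dif_pos h
    rw [heqv, if_pos h]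
    simp only [hbR, hbS]
    rw [e_mk, map_pow, f_X0]
    simp only [Fin.val_zero, pow_zero, Algebra.smul_def, mul_one, map_pow]
  · have heqv : eqv i = (⟨(i : ℕ) - n, by omega⟩, 1) := dif_neg h
    rw [heqv, if_neg h]
    simp only [hbR, hbS]
    rw [e_mk, map_mul, map_pow, f_X0, f_X1]
    simp only [Fin.val_one, pow_one, Algebra.smul_def, map_pow]
    exact mul_comm _ _

end
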